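/- For s ∈ (0,1) let F_s(x) = ∫_s^x du/(u²√(u²−s²)) for x ∈ [s,1]. Then sup over a ∈ L^∞([0,1]) with ∫₀¹ a = 1 of inf_{s∈(0,1)} (1/F_s(1)) ∫_s^1 a(u)/(u²√(u²−s²)) du equals 1, and the supremum is attained at a ≡ 1. -/

import Mathlib

open MeasureTheory Real Set

-- integrability of (d - x)^(-1/2) on c..d
lemma sqrtInv_intInt (c d : ℝ) :
    IntervalIntegrable (fun x => (d - x) ^ (-(1/2) : ℝ)) volume c d := by
  have h := intervalIntegral.intervalIntegrable_rpow' (a := d - c) (b := 0) (r := -(1/2)) (by norm_num)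
  simpa using h.comp_sub_left d

lemma sqrtInv_intInt' (c d : ℝ) :
    IntervalIntegrable (fun x => (x - c) ^ (-(1/2) : ℝ)) volume c d := by
  have h := intervalIntegral.intervalIntegrable_rpow' (a := 0) (b := d - c) (r := -(1/2)) (by norm_num)
  simpa using h.comp_sub_right c

lemma mono_integrableOn {f g : ℝ → ℝ} {S : Set ℝ} (hS : MeasurableSet S)
    (hg : IntegrableOn g S) (hf : AEStronglyMeasurable f (volume.restrict S))
    (h : ∀ x ∈ S, |f x| ≤ g x) : IntegrableOn f S := by
  refine hg.mono' hf ?_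
  filter_upwards [ae_restrict_mem hS] with x hx
  simpa using h x hx

lemma lemA_integrable {u : ℝ} (hu : 0 < u) :
    IntegrableOn (fun s => s ^ 2 / Real.sqrt (u ^ 2 - s ^ 2)) (Ioo 0 u) := by
  have hg : IntegrableOn (fun s => u ^ 2 / Real.sqrt u * (u - s) ^ (-(1/2) : ℝ)) (Ioo 0 u) := by
    have := ((sqrtInv_intInt 0 u).const_mul (u ^ 2 / Real.sqrt u)).1
    exact this.mono_set Ioo_subset_Ioc_self
  refine mono_integrableOn measurableSet_Ioo hg ?_ ?_
  · apply Measurable.aestronglyMeasurable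
    exact (measurable_id.pow_const 2).div ((measurable_const.sub (measurable_id.pow_const 2)).sqrt)
  · intro s hs
    obtain ⟨hs0, hsu⟩ := hs
    have h1 : Real.sqrt u * Real.sqrt (u - s) ≤ Real.sqrt (u ^ 2 - s ^ 2) := by
      rw [← Real.sqrt_mul hu.le]
      apply Real.sqrt_le_sqrt
      nlinarith
    have h2 : (0:ℝ) < Real.sqrt (u - s) := Real.sqrt_pos.2 (by linarith)
    have h3 : (0:ℝ) < Real.sqrt u := Real.sqrt_pos.2 hu
    have h4 : (0:ℝ) < Real.sqrt (u ^ 2 - s ^ 2) := lt_of_lt_of_le (by positivity) h1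
    rw [abs_of_nonneg (by positivity)]
    rw [Real.rpow_neg (by linarith), ← Real.sqrt_eq_rpow]
    rw [div_le_iff₀ h4, mul_assoc, mul_comm ((Real.sqrt (u-s))⁻¹), ← mul_assoc]
    calc s ^ 2 ≤ u ^ 2 := by nlinarith
      _ = u ^ 2 / Real.sqrt u * (Real.sqrt u * Real.sqrt (u-s)) * (Real.sqrt (u-s))⁻¹ := by
          field_simp
      _ ≤ _ := by
          apply mul_le_mul_of_nonneg_right _ (by positivity)
          apply mul_le_mul_of_nonneg_left h1 (by positivity)

lemma lemA_value {u : ℝ} (hu : 0 < u) :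
    ∫ s in Ioo 0 u, s ^ 2 / Real.sqrt (u ^ 2 - s ^ 2) = π / 4 * u ^ 2 := by
  have hint : IntervalIntegrable (fun s => s ^ 2 / Real.sqrt (u ^ 2 - s ^ 2)) volume 0 u := by
    rw [intervalIntegrable_iff_integrableOn_Ioo_of_le hu.le]
    exact lemA_integrable hu
  have key : (∫ s in (0:ℝ)..u, s ^ 2 / Real.sqrt (u ^ 2 - s ^ 2)) = π / 4 * u ^ 2 := by
    have := intervalIntegral.integral_eq_sub_of_hasDerivAt_of_le hu.le
      (f := fun s => u ^ 2 / 2 * Real.arcsin (s / u) - s / 2 * Real.sqrt (u ^ 2 - s ^ 2))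
      (f' := fun s => s ^ 2 / Real.sqrt (u ^ 2 - s ^ 2)) ?_ ?_ hint
    · rw [this]
      simp [div_self hu.ne', Real.arcsin_one]
      ring
    · apply ContinuousOn.sub
      · exact (continuous_const.mul (Real.continuous_arcsin.comp
          (continuous_id.div_const u))).continuousOn
      · exact ((continuous_id.div_const 2).mul
          ((continuous_const.sub (continuous_pow 2)).sqrt)).continuousOn
    · intro s hs
      obtain ⟨hs0, hsu⟩ := hs
      have hpos : 0 < u ^ 2 - s ^ 2 := by nlinarith
      have hsq : 0 < Real.sqrt (u ^ 2 - s ^ 2) := Real.sqrt_pos.2 hpos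
      have hne1 : s / u ≠ -1 := by
        have : 0 < s / u := div_pos hs0 hu
        linarith
      have hne2 : s / u ≠ 1 := by
        have : s / u < 1 := (div_lt_one hu).2 hsu
        linarith
      have h1 : HasDerivAt (fun s : ℝ => Real.arcsin (s / u))
          (1 / Real.sqrt (1 - (s / u) ^ 2) * (1 / u)) s := by
        exact (Real.hasDerivAt_arcsin hne1 hne2).comp s ((hasDerivAt_id s).div_const u)
      have h2 : HasDerivAt (fun s : ℝ => Real.sqrt (u ^ 2 - s ^ 2))
          (1 / (2 * Real.sqrt (u ^ 2 - s ^ 2)) * (0 - 2 * s)) s := by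
        exact (Real.hasDerivAt_sqrt hpos.ne').comp s
          ((hasDerivAt_const s (u^2)).sub ((hasDerivAt_pow 2 s).congr_deriv (by ring)))
      have h3 := ((h1.const_mul (u ^ 2 / 2)).sub
        (((hasDerivAt_id s).div_const 2).mul h2))
      convert h3 using 1
      · funext x; simp only [Pi.sub_apply, Pi.mul_apply, id]
      have hsqrt1 : Real.sqrt (1 - (s / u) ^ 2) = Real.sqrt (u ^ 2 - s ^ 2) / u := by
        rw [show (1 - (s/u)^2) = (u^2 - s^2)/u^2 by field_simp]
        rw [Real.sqrt_div hpos.le, Real.sqrt_sq hu.le]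
      rw [hsqrt1]
      have e1 : Real.sqrt (u ^ 2 - s ^ 2) * Real.sqrt (u ^ 2 - s ^ 2) = u ^ 2 - s ^ 2 :=
        Real.mul_self_sqrt hpos.le
      simp only [id]
      field_simp
      linear_combination 2 * e1
  rw [← key, intervalIntegral.integral_of_le hu.le, integral_Ioc_eq_integral_Ioo]

lemma lemB_integrable {s : ℝ} (hs0 : 0 < s) (hs1 : s < 1) {b : ℝ → ℝ} (hb : Measurable b)
    {C : ℝ} (hC : ∀ u, |b u| ≤ C) :
    IntegrableOn (fun u => b u / (u ^ 2 * Real.sqrt (u ^ 2 - s ^ 2))) (Ioo s 1) := by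
  have hC0 : 0 ≤ C := le_trans (abs_nonneg _) (hC 0)
  have hg : IntegrableOn (fun u => C / (s ^ 2 * Real.sqrt s) * (u - s) ^ (-(1/2) : ℝ))
      (Ioo s 1) := by
    have := ((sqrtInv_intInt' s 1).const_mul (C / (s ^ 2 * Real.sqrt s))).1
    exact this.mono_set Ioo_subset_Ioc_self
  refine mono_integrableOn measurableSet_Ioo hg ?_ ?_
  · apply Measurable.aestronglyMeasurable
    exact hb.div ((measurable_id.pow_const 2).mul
      ((measurable_id.pow_const 2).sub measurable_const).sqrt)
  · intro u hu
    obtain ⟨hsu, hu1⟩ := hu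
    have hu0 : 0 < u := lt_trans hs0 hsu
    have h1 : Real.sqrt s * Real.sqrt (u - s) ≤ Real.sqrt (u ^ 2 - s ^ 2) := by
      rw [← Real.sqrt_mul hs0.le]
      apply Real.sqrt_le_sqrt
      nlinarith
    have h2 : (0:ℝ) < Real.sqrt (u - s) := Real.sqrt_pos.2 (by linarith)
    have h3 : (0:ℝ) < Real.sqrt s := Real.sqrt_pos.2 hs0
    have h4 : (0:ℝ) < Real.sqrt (u ^ 2 - s ^ 2) := lt_of_lt_of_le (by positivity) h1
    have hden : (0:ℝ) < u ^ 2 * Real.sqrt (u ^ 2 - s ^ 2) := by positivity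
    rw [Real.rpow_neg (by linarith), ← Real.sqrt_eq_rpow, abs_div, abs_of_nonneg hden.le]
    rw [div_le_iff₀ hden]
    have e1 : C / (s ^ 2 * Real.sqrt s) * (Real.sqrt (u - s))⁻¹ *
        (u ^ 2 * Real.sqrt (u ^ 2 - s ^ 2)) =
        C * (u ^ 2 / s ^ 2) * (Real.sqrt (u ^ 2 - s ^ 2) / (Real.sqrt s * Real.sqrt (u - s))) := by
      field_simp
    rw [e1]
    have hu2s2 : (1:ℝ) ≤ u ^ 2 / s ^ 2 := (one_le_div (by positivity)).2 (by nlinarith)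
    have hrat : (1:ℝ) ≤ Real.sqrt (u ^ 2 - s ^ 2) / (Real.sqrt s * Real.sqrt (u - s)) :=
      (one_le_div (by positivity)).2 h1
    calc |b u| ≤ C := hC u
      _ = C * 1 * 1 := by ring
      _ ≤ _ := by
        apply mul_le_mul _ hrat zero_le_one (by positivity)
        exact mul_le_mul_of_nonneg_left hu2s2 hC0

lemma exists_nonpos {h : ℝ → ℝ} (hb : Measurable h) {C : ℝ} (hC : ∀ u, |h u| ≤ C)
    (hzero : (∫ u in Ioo (0:ℝ) 1, h u) = 0) :
    ∃ s : ℝ, 0 < s ∧ s < 1 ∧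
      (∫ u in Ioo s 1, h u / (u ^ 2 * Real.sqrt (u ^ 2 - s ^ 2))) ≤ 0 := by
  by_contra hcon
  push_neg at hcon
  set μ : Measure ℝ := volume.restrict (Ioo 0 1) with hμdef
  haveI : IsFiniteMeasure μ := by
    constructor
    rw [hμdef, Measure.restrict_apply_univ, Real.volume_Ioo]
    norm_num
  set k : ℝ × ℝ → ℝ := fun p =>
    if p.1 < p.2 then p.1 ^ 2 * h p.2 / (p.2 ^ 2 * Real.sqrt (p.2 ^ 2 - p.1 ^ 2)) else 0
    with hkdef
  have hkm : Measurable k := by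
    apply Measurable.ite (measurableSet_lt measurable_fst measurable_snd)
    · exact ((measurable_fst.pow_const 2).mul (hb.comp measurable_snd)).div
        ((measurable_snd.pow_const 2).mul
          (((measurable_snd.pow_const 2).sub (measurable_fst.pow_const 2)).sqrt))
    · exact measurable_const
  -- sections in s
  have hsetin : ∀ u : ℝ, u ≤ 1 → Iio u ∩ Ioo (0:ℝ) 1 = Ioo 0 u := by
    intro u hu1
    ext x
    simp only [Set.mem_inter_iff, Set.mem_Iio, Set.mem_Ioo]
    constructor
    · rintro ⟨hx, hx0, _⟩; exact ⟨hx0, hx⟩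
    · rintro ⟨hx0, hxu⟩; exact ⟨hxu, hx0, lt_of_lt_of_le hxu hu1⟩
  have hindic : ∀ u : ℝ, (fun s => k (s, u)) =
      Set.indicator (Iio u) (fun s => h u / u ^ 2 * (s ^ 2 / Real.sqrt (u ^ 2 - s ^ 2))) := by
    intro u
    funext s
    rw [Set.indicator_apply]
    simp only [hkdef, Set.mem_Iio]
    by_cases hs : s < u
    · simp only [hs, if_true]
      ring
    · simp only [hs, if_false]
  have hsec : ∀ u ∈ Ioo (0:ℝ) 1, Integrable (fun s => k (s, u)) μ := by
    intro u hu
    rw [hindic u, integrable_indicator_iff measurableSet_Iio]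
    rw [IntegrableOn, hμdef, Measure.restrict_restrict measurableSet_Iio, hsetin u hu.2.le]
    exact (lemA_integrable hu.1).const_mul _
  have hval : ∀ u ∈ Ioo (0:ℝ) 1, (∫ s, k (s, u) ∂μ) = π / 4 * h u := by
    intro u hu
    rw [hindic u, integral_indicator measurableSet_Iio, hμdef,
      Measure.restrict_restrict measurableSet_Iio, hsetin u hu.2.le,
      integral_const_mul, lemA_value hu.1]
    have hu2 : (u:ℝ) ^ 2 ≠ 0 := pow_ne_zero 2 (ne_of_gt hu.1)
    field_simp
    exact mul_div_cancel_right₀ _ (ne_of_gt hu.1)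
  have hnormval : ∀ u ∈ Ioo (0:ℝ) 1, (∫ s, ‖k (s, u)‖ ∂μ) = π / 4 * |h u| := by
    intro u hu
    have : (fun s => ‖k (s, u)‖) =
        Set.indicator (Iio u) (fun s => |h u| / u ^ 2 * (s ^ 2 / Real.sqrt (u ^ 2 - s ^ 2))) := by
      funext s
      rw [congrFun (hindic u) s, Real.norm_eq_abs, Set.indicator_apply, Set.indicator_apply]
      by_cases hs : s ∈ Iio u
      · simp only [hs, if_true]
        rw [abs_mul, abs_div, abs_div, abs_of_nonneg (by positivity : (0:ℝ) ≤ u ^ 2),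
          abs_of_nonneg (by positivity : (0:ℝ) ≤ s ^ 2),
          abs_of_nonneg (Real.sqrt_nonneg _)]
      · simp only [hs, if_false, abs_zero]
    rw [this, integral_indicator measurableSet_Iio, hμdef,
      Measure.restrict_restrict measurableSet_Iio, hsetin u hu.2.le,
      integral_const_mul, lemA_value hu.1]
    have hu2 : (u:ℝ) ^ 2 ≠ 0 := pow_ne_zero 2 (ne_of_gt hu.1)
    field_simp
    exact mul_div_cancel_right₀ _ (ne_of_gt hu.1)
  have hCnn : 0 ≤ C := le_trans (abs_nonneg _) (hC 0)
  have hhint : Integrable h μ := by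
    refine Integrable.mono' (integrable_const C) hb.aestronglyMeasurable ?_
    filter_upwards with x using hC x
  have hkint : Integrable k (μ.prod μ) := by
    rw [integrable_prod_iff' hkm.aestronglyMeasurable]
    constructor
    · filter_upwards [ae_restrict_mem measurableSet_Ioo] with u hu using hsec u hu
    · refine Integrable.congr ((hhint.abs.const_mul (π / 4))) ?_
      filter_upwards [ae_restrict_mem measurableSet_Ioo] with u hu
      exact (hnormval u hu).symm
  -- swap
  have hswap := integral_integral_swap (f := fun s u => k (s, u)) (μ := μ) (ν := μ)
    (by exact hkint)
  have hRHS : (∫ u, ∫ s, k (s, u) ∂μ ∂μ) = 0 := by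
    rw [integral_congr_ae (g := fun u => π / 4 * h u)]
    · rw [integral_const_mul, hzero, mul_zero]
    · filter_upwards [ae_restrict_mem measurableSet_Ioo] with u hu using hval u hu
  -- inner integral in u, for fixed s
  have hsetin2 : ∀ s : ℝ, 0 ≤ s → Ioi s ∩ Ioo (0:ℝ) 1 = Ioo s 1 := by
    intro s hs0
    ext x
    simp only [Set.mem_inter_iff, Set.mem_Ioi, Set.mem_Ioo]
    constructor
    · rintro ⟨hx, _, hx1⟩; exact ⟨hx, hx1⟩
    · rintro ⟨hx, hx1⟩; exact ⟨hx, lt_of_le_of_lt hs0 hx, hx1⟩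
  have hindic2 : ∀ s : ℝ, (fun u => k (s, u)) =
      Set.indicator (Ioi s) (fun u => s ^ 2 * (h u / (u ^ 2 * Real.sqrt (u ^ 2 - s ^ 2)))) := by
    intro s
    funext u
    rw [Set.indicator_apply]
    simp only [hkdef, Set.mem_Ioi]
    by_cases hs : s < u
    · simp only [hs, if_true]
      ring
    · simp only [hs, if_false]
  have hpsi : ∀ s ∈ Ioo (0:ℝ) 1, (∫ u, k (s, u) ∂μ) =
      s ^ 2 * ∫ u in Ioo s 1, h u / (u ^ 2 * Real.sqrt (u ^ 2 - s ^ 2)) := by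
    intro s hs
    rw [hindic2 s, integral_indicator measurableSet_Ioi, hμdef,
      Measure.restrict_restrict measurableSet_Ioi, hsetin2 s hs.1.le, integral_const_mul]
  have hpsipos : ∀ s ∈ Ioo (0:ℝ) 1, 0 < ∫ u, k (s, u) ∂μ := by
    intro s hs
    rw [hpsi s hs]
    exact mul_pos (pow_pos hs.1 2) (hcon s hs.1 hs.2)
  have hpsiint : Integrable (fun s => ∫ u, k (s, u) ∂μ) μ := hkint.integral_prod_left
  have hzero' : (∫ s, (∫ u, k (s, u) ∂μ) ∂μ) = 0 := by rw [hswap, hRHS]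
  have hae : (fun s => ∫ u, k (s, u) ∂μ) =ᵐ[μ] 0 := by
    rw [← integral_eq_zero_iff_of_nonneg_ae ?_ hpsiint]
    · exact hzero'
    · filter_upwards [ae_restrict_mem measurableSet_Ioo] with s hs using (hpsipos s hs).le
  have hfalse : ∀ᵐ s ∂μ, False := by
    filter_upwards [ae_restrict_mem measurableSet_Ioo, hae] with s hs h0
    exact absurd h0 (hpsipos s hs).ne'
  have : μ Set.univ = 0 := by simpa [ae_iff] using hfalse
  rw [hμdef, Measure.restrict_apply_univ, Real.volume_Ioo] at this
  norm_num at this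

lemma w_integrableOn {s : ℝ} (hs0 : 0 < s) (hs1 : s < 1) :
    IntegrableOn (fun u => 1 / (u ^ 2 * Real.sqrt (u ^ 2 - s ^ 2))) (Ioo s 1) :=
  lemB_integrable hs0 hs1 measurable_const (C := 1) (fun _ => by norm_num)

lemma w_intervalIntegrable {s : ℝ} (hs0 : 0 < s) (hs1 : s < 1) :
    IntervalIntegrable (fun u => 1 / (u ^ 2 * Real.sqrt (u ^ 2 - s ^ 2))) volume s 1 := by
  rw [intervalIntegrable_iff_integrableOn_Ioo_of_le hs1.le]
  exact w_integrableOn hs0 hs1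

lemma F_pos {s : ℝ} (hs0 : 0 < s) (hs1 : s < 1) :
    0 < ∫ u in s..1, 1 / (u ^ 2 * Real.sqrt (u ^ 2 - s ^ 2)) := by
  apply intervalIntegral.intervalIntegral_pos_of_pos_on (w_intervalIntegrable hs0 hs1) _ hs1
  intro x hx
  have hx0 : 0 < x := lt_trans hs0 hx.1
  have : 0 < Real.sqrt (x ^ 2 - s ^ 2) := Real.sqrt_pos.2 (by nlinarith [hx.1])
  positivity

theorem stmt14 (F : ℝ → ℝ → ℝ)
    (hF : ∀ s x : ℝ, F s x = ∫ u in s..x, 1 / (u ^ 2 * Real.sqrt (u ^ 2 - s ^ 2))) :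
    (⨅ s : Set.Ioo (0 : ℝ) 1, (1 / F (s : ℝ) 1) *
        ∫ u in (s : ℝ)..1, (1 : ℝ) / (u ^ 2 * Real.sqrt (u ^ 2 - (s : ℝ) ^ 2))) = 1 ∧
    (∀ a : ℝ → ℝ, Measurable a → (∃ C : ℝ, ∀ u, |a u| ≤ C) →
      (∫ u in (0 : ℝ)..1, a u) = 1 →
      (⨅ s : Set.Ioo (0 : ℝ) 1, (1 / F (s : ℝ) 1) *
          ∫ u in (s : ℝ)..1, a u / (u ^ 2 * Real.sqrt (u ^ 2 - (s : ℝ) ^ 2))) ≤ 1) := by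
  haveI : Nonempty ↥(Set.Ioo (0:ℝ) 1) := ⟨⟨1/2, by constructor <;> norm_num⟩⟩
  constructor
  · have : ∀ s : Set.Ioo (0:ℝ) 1, (1 / F (s : ℝ) 1) *
        (∫ u in (s : ℝ)..1, (1:ℝ) / (u ^ 2 * Real.sqrt (u ^ 2 - (s : ℝ) ^ 2))) = 1 := by
      rintro ⟨s, hs0, hs1⟩
      rw [hF s 1]
      exact one_div_mul_cancel (F_pos hs0 hs1).ne'
    rw [iInf_congr this]
    exact ciInf_const
  · rintro a hma ⟨C, hC⟩ hint1
    -- apply the key lemma to h := a - 1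
    have hCnn : 0 ≤ C := le_trans (abs_nonneg _) (hC 0)
    have hzero : (∫ u in Ioo (0:ℝ) 1, (a u - 1)) = 0 := by
      have hia : IntegrableOn a (Ioo (0:ℝ) 1) := by
        refine Integrable.mono' (integrable_const C) hma.aestronglyMeasurable ?_
        filter_upwards with x using hC x
      rw [integral_sub hia (integrable_const 1)]
      have h1 : (∫ u in Ioo (0:ℝ) 1, a u) = 1 := by
        rw [← integral_Ioc_eq_integral_Ioo, ← intervalIntegral.integral_of_le (by norm_num : (0:ℝ) ≤ 1)]
        exact hint1
      rw [h1]
      simp [Real.volume_Ioo]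
    obtain ⟨s₀, hs0, hs1, hle⟩ := exists_nonpos (hma.sub measurable_const)
      (C := C + 1) (fun u => (abs_sub (a u) 1).trans (by simpa using add_le_add_right (hC u) 1))
      hzero
    -- at s₀, the functional is ≤ 1
    have hF0 : 0 < F s₀ 1 := by rw [hF s₀ 1]; exact F_pos hs0 hs1
    have haw : IntegrableOn (fun u => a u / (u ^ 2 * Real.sqrt (u ^ 2 - s₀ ^ 2))) (Ioo s₀ 1) :=
      lemB_integrable hs0 hs1 hma hC
    have hsub : (∫ u in Ioo s₀ 1, (a u - 1) / (u ^ 2 * Real.sqrt (u ^ 2 - s₀ ^ 2))) =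
        (∫ u in Ioo s₀ 1, a u / (u ^ 2 * Real.sqrt (u ^ 2 - s₀ ^ 2))) -
        (∫ u in Ioo s₀ 1, 1 / (u ^ 2 * Real.sqrt (u ^ 2 - s₀ ^ 2))) := by
      rw [← integral_sub haw (w_integrableOn hs0 hs1)]
      congr 1
      funext u
      rw [sub_div]
    simp only [Pi.sub_apply] at hle
    rw [hsub] at hle
    have key : (∫ u in s₀..1, a u / (u ^ 2 * Real.sqrt (u ^ 2 - s₀ ^ 2))) ≤ F s₀ 1 := by
      rw [hF s₀ 1, intervalIntegral.integral_of_le hs1.le, intervalIntegral.integral_of_le hs1.le,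
        integral_Ioc_eq_integral_Ioo, integral_Ioc_eq_integral_Ioo]
      linarith
    have hterm : (1 / F s₀ 1) *
        (∫ u in s₀..1, a u / (u ^ 2 * Real.sqrt (u ^ 2 - s₀ ^ 2))) ≤ 1 := by
      rw [div_mul_eq_mul_div, one_mul, div_le_one hF0]
      exact key
    set f : Set.Ioo (0:ℝ) 1 → ℝ := fun s => (1 / F (s : ℝ) 1) *
        ∫ u in (s : ℝ)..1, a u / (u ^ 2 * Real.sqrt (u ^ 2 - (s : ℝ) ^ 2)) with hfdef
    by_cases hbd : BddBelow (Set.range f)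
    · exact le_trans (ciInf_le hbd ⟨s₀, hs0, hs1⟩) hterm
    · rw [Real.iInf_of_not_bddBelow hbd]
      norm_num
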